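/- If {f_k} is a (U, C)-controlled Bessel sequence in H (i.e., the sums Σ_k ⟨f, Uf_k⟩⟨Cf_k, f⟩ converge and are bounded by B‖f‖² for all f), then {f_k} is a Bessel sequence in H, i.e., there exists B' > 0 such that Σ_k |⟨f, f_k⟩|² ≤ B'‖f‖² for all f ∈ H. -/

import Mathlib

open scoped ComplexInnerProductSpace ComplexOrder
open ContinuousLinearMap

theorem stmt_5 {H : Type*} [NormedAddCommGroup H] [InnerProductSpace ℂ H]
    [CompleteSpace H]
    (U Ui C Ci : H →L[ℂ] H)
    (hUUi : U ∘L Ui = 1) (hUiU : Ui ∘L U = 1)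
    (hCCi : C ∘L Ci = 1) (hCiC : Ci ∘L C = 1)
    (F : ℕ → H) (B : ℝ) (hB : 0 < B)
    (hBessel : ∀ f : H, ∃ s : ℂ,
      HasSum (fun k => ⟪U (F k), f⟫ * ⟪f, C (F k)⟫) s ∧
      s ≤ ((B * ‖f‖ ^ 2 : ℝ) : ℂ)) :
    ∃ B' : ℝ, 0 < B' ∧ ∀ f : H,
      Summable (fun k => ‖⟪F k, f⟫‖ ^ 2) ∧
      ∑' k, ‖⟪F k, f⟫‖ ^ 2 ≤ B' * ‖f‖ ^ 2 := by
  classical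
  have hnormc : ∀ (u : H) (k : ℕ), ⟪F k, u⟫ * ⟪u, F k⟫ = ((‖⟪F k, u⟫‖ ^ 2 : ℝ) : ℂ) := by
    intro u k
    rw [← inner_conj_symm u (F k), Complex.mul_conj]
    norm_cast
    simp [Complex.normSq_eq_norm_sq]
  -- Step 1: summability for every h
  have hsum : ∀ h : H, Summable (fun k => ‖⟪F k, h⟫‖ ^ 2) := by
    intro h
    set x := ContinuousLinearMap.adjoint Ui h with hx
    set y := ContinuousLinearMap.adjoint Ci h with hy
    obtain ⟨s0, hs0, -⟩ := hBessel (x + y)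
    obtain ⟨s1, hs1, -⟩ := hBessel (x + Complex.I • y)
    obtain ⟨s2, hs2, -⟩ := hBessel (x - y)
    obtain ⟨s3, hs3, -⟩ := hBessel (x - Complex.I • y)
    have hcomb := ((hs0.add (hs1.mul_left Complex.I)).sub
      (hs2.add (hs3.mul_left Complex.I))).div_const 4
    have ha : ∀ k : ℕ, ⟪U (F k), x⟫ = ⟪F k, h⟫ := by
      intro k
      rw [hx, ContinuousLinearMap.adjoint_inner_right]
      have h1 : Ui (U (F k)) = F k := by
        have := congrArg (fun T : H →L[ℂ] H => T (F k)) hUiU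
        simpa using this
      rw [h1]
    have hd : ∀ k : ℕ, ⟪y, C (F k)⟫ = ⟪h, F k⟫ := by
      intro k
      rw [hy, ContinuousLinearMap.adjoint_inner_left]
      have h1 : Ci (C (F k)) = F k := by
        have := congrArg (fun T : H →L[ℂ] H => T (F k)) hCiC
        simpa using this
      rw [h1]
    have hkey : ∀ k : ℕ,
        (⟪U (F k), x + y⟫ * ⟪x + y, C (F k)⟫
          + Complex.I * (⟪U (F k), x + Complex.I • y⟫ * ⟪x + Complex.I • y, C (F k)⟫)
          - (⟪U (F k), x - y⟫ * ⟪x - y, C (F k)⟫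
          + Complex.I * (⟪U (F k), x - Complex.I • y⟫ * ⟪x - Complex.I • y, C (F k)⟫))) / 4
        = ((‖⟪F k, h⟫‖ ^ 2 : ℝ) : ℂ) := by
      intro k
      rw [← hnormc h k]
      simp only [inner_add_right, inner_add_left, inner_sub_right, inner_sub_left,
        inner_smul_right, inner_smul_left, Complex.conj_I, ha k, hd k]
      linear_combination ((⟪U (F k), y⟫ * ⟪x, C (F k)⟫ - ⟪F k, h⟫ * ⟪h, F k⟫) / 2) * Complex.I_sq
    have hcomb' : HasSum (fun k => ((‖⟪F k, h⟫‖ ^ 2 : ℝ) : ℂ))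
        ((s0 + Complex.I * s1 - (s2 + Complex.I * s3)) / 4) := by
      simpa only [hkey] using hcomb
    have hre := ((Complex.hasSum_iff _ _).1 hcomb').1
    have : HasSum (fun k => ‖⟪F k, h⟫‖ ^ 2)
        (((s0 + Complex.I * s1 - (s2 + Complex.I * s3)) / 4).re) := by
      simpa [← Complex.ofReal_pow] using hre
    exact this.summable
  -- the partial-sum operators
  set P : ℕ → H →L[ℂ] H :=
    fun n => ∑ k ∈ Finset.range n, (innerSL ℂ (F k)).smulRight (F k) with hP
  have hPapply : ∀ (n : ℕ) (u : H), P n u = ∑ k ∈ Finset.range n, ⟪F k, u⟫ • F k := by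
    intro n u
    simp [hP, ContinuousLinearMap.sum_apply]
  have hinnerP : ∀ (n : ℕ) (g u : H),
      ⟪g, P n u⟫ = ∑ k ∈ Finset.range n, ⟪F k, u⟫ * ⟪g, F k⟫ := by
    intro n g u
    rw [hPapply]
    simp [inner_sum, inner_smul_right]
  have hpartial : ∀ (u : H) (n : ℕ),
      ∑ k ∈ Finset.range n, ‖⟪F k, u⟫‖ ^ 2 ≤ ∑' k, ‖⟪F k, u⟫‖ ^ 2 := by
    intro u n
    exact Summable.sum_le_tsum _ (fun _ _ => by positivity) (hsum u)
  -- first Banach-Steinhaus: pointwise boundedness of P n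
  have hP1 : ∀ u : H, ∃ Cu : ℝ, ∀ n : ℕ, ‖P n u‖ ≤ Cu := by
    intro u
    have hb : ∀ g : H, ∃ Cg : ℝ, ∀ n : ℕ, ‖(innerSL ℂ (P n u)) g‖ ≤ Cg := by
      intro g
      refine ⟨Real.sqrt (∑' k, ‖⟪F k, u⟫‖ ^ 2) * Real.sqrt (∑' k, ‖⟪F k, g⟫‖ ^ 2), fun n => ?_⟩
      have h1 : (innerSL ℂ (P n u)) g = ∑ k ∈ Finset.range n, ⟪u, F k⟫ * ⟪F k, g⟫ := by
        calc (innerSL ℂ (P n u)) g = ⟪P n u, g⟫ := rfl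
          _ = (starRingEnd ℂ) ⟪g, P n u⟫ := (inner_conj_symm _ _).symm
          _ = ∑ k ∈ Finset.range n, ⟪u, F k⟫ * ⟪F k, g⟫ := by
              rw [hinnerP n g u, map_sum]
              exact Finset.sum_congr rfl fun k _ => by
                rw [map_mul, inner_conj_symm, inner_conj_symm]
      rw [h1]
      calc ‖∑ k ∈ Finset.range n, ⟪u, F k⟫ * ⟪F k, g⟫‖
          ≤ ∑ k ∈ Finset.range n, ‖⟪u, F k⟫ * ⟪F k, g⟫‖ := norm_sum_le _ _
        _ = ∑ k ∈ Finset.range n, ‖⟪F k, u⟫‖ * ‖⟪F k, g⟫‖ := by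
            refine Finset.sum_congr rfl fun k _ => ?_
            rw [norm_mul, norm_inner_symm]
        _ ≤ Real.sqrt (∑ k ∈ Finset.range n, ‖⟪F k, u⟫‖ ^ 2) *
              Real.sqrt (∑ k ∈ Finset.range n, ‖⟪F k, g⟫‖ ^ 2) :=
            Real.sum_mul_le_sqrt_mul_sqrt _ _ _
        _ ≤ Real.sqrt (∑' k, ‖⟪F k, u⟫‖ ^ 2) * Real.sqrt (∑' k, ‖⟪F k, g⟫‖ ^ 2) := by
            have := hpartial u n
            have := hpartial g n
            gcongr
    obtain ⟨Cu, hCu⟩ := banach_steinhaus hb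
    exact ⟨Cu, fun n => by rw [← innerSL_apply_norm ℂ (P n u)]; exact hCu n⟩
  obtain ⟨M, hM⟩ := banach_steinhaus hP1
  have hM0 : 0 ≤ M := le_trans (norm_nonneg _) (hM 0)
  refine ⟨M + 1, by linarith, fun f => ?_⟩
  refine ⟨hsum f, ?_⟩
  refine Summable.tsum_le_of_sum_le (hsum f) (fun s => ?_)
  obtain ⟨n, hn⟩ := s.exists_nat_subset_range
  have h2 : ∑ k ∈ s, ‖⟪F k, f⟫‖ ^ 2 ≤ ∑ k ∈ Finset.range n, ‖⟪F k, f⟫‖ ^ 2 :=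
    Finset.sum_le_sum_of_subset_of_nonneg hn (fun _ _ _ => by positivity)
  have h3 : ((∑ k ∈ Finset.range n, ‖⟪F k, f⟫‖ ^ 2 : ℝ) : ℂ) = ⟪f, P n f⟫ := by
    rw [hinnerP]
    rw [Complex.ofReal_sum]
    exact Finset.sum_congr rfl (fun k _ => (hnormc f k).symm)
  have h4 : ∑ k ∈ Finset.range n, ‖⟪F k, f⟫‖ ^ 2 ≤ ‖⟪f, P n f⟫‖ := by
    calc ∑ k ∈ Finset.range n, ‖⟪F k, f⟫‖ ^ 2
        = (⟪f, P n f⟫ : ℂ).re := by rw [← h3, Complex.ofReal_re]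
      _ ≤ ‖(⟪f, P n f⟫ : ℂ)‖ := Complex.re_le_norm _
  have h5 : ‖⟪f, P n f⟫‖ ≤ ‖f‖ * ‖P n f‖ := norm_inner_le_norm _ _
  have h6 : ‖P n f‖ ≤ M * ‖f‖ := le_trans ((P n).le_opNorm f)
    (mul_le_mul_of_nonneg_right (hM n) (norm_nonneg f))
  nlinarith [norm_nonneg f]
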